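/- Fix a real λ > 0 and x ∈ ℤ. With P(S_n = x) := 2^{−n} · |{ε ∈ {−1,1}^n : ε_1 + ⋯ + ε_n = x}| (simple random walk on ℤ), define for k ∈ ℕ the weights a_k := (λ^k / k!) · P(S_k = x) and b_k := ((λ/2)^k / k!) · 1{k ≡ x (mod 2)}. Then for all natural numbers k ≤ l, a_k · b_l ≤ a_l · b_k. -/

import Mathlib

open Finset

private def cnt (x : ℤ) (n : ℕ) : ℕ :=
  (univ.filter (fun ε : Fin n → Bool =>
    ∑ i, (if ε i then (1 : ℤ) else -1) = x)).card

private lemma sum_mod_two (n : ℕ) (ε : Fin n → Bool) :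
    (∑ i, (if ε i then (1 : ℤ) else -1)) % 2 = (n : ℤ) % 2 := by
  rw [Finset.sum_int_mod]
  have : ∀ i : Fin n, (if ε i then (1 : ℤ) else -1) % 2 = 1 := by
    intro i; cases ε i <;> simp
  simp [this]

private lemma cnt_zero_of_parity (x : ℤ) (n : ℕ) (h : (n : ℤ) % 2 ≠ x % 2) :
    cnt x n = 0 := by
  rw [cnt, Finset.card_eq_zero, Finset.filter_eq_empty_iff]
  intro ε _ hsum
  exact h (by rw [← hsum, sum_mod_two])

private lemma cnt_step (x : ℤ) (n : ℕ) : cnt x n ≤ cnt x (n + 2) := by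
  unfold cnt
  apply Finset.card_le_card_of_injOn
    (fun ε : Fin n → Bool => (Fin.snoc (Fin.snoc ε true) false : Fin (n+2) → Bool))
  · intro ε hε
    simp only [Finset.mem_coe, Finset.mem_filter, Finset.mem_univ, true_and] at hε ⊢
    rw [Fin.sum_univ_castSucc, Fin.sum_univ_castSucc]
    simp [Fin.snoc_castSucc, Fin.snoc_last, hε]
  · intro ε _ ε' _ h
    funext i
    have := congrFun h (i.castSucc.castSucc)
    simpa [Fin.snoc_castSucc] using this

private lemma cnt_mono (x : ℤ) (k m : ℕ) : cnt x k ≤ cnt x (k + 2 * m) := by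
  induction m with
  | zero => simp
  | succ m ih =>
      calc cnt x k ≤ cnt x (k + 2 * m) := ih
        _ ≤ cnt x (k + 2 * m + 2) := cnt_step x _
        _ = cnt x (k + 2 * (m + 1)) := by ring_nf

theorem lemma_3_7_lr (lam : ℝ) (hlam : 0 < lam) (x : ℤ)
    (a b : ℕ → ℝ)
    (ha : ∀ n, a n = lam ^ n / n.factorial *
      (((univ.filter (fun ε : Fin n → Bool =>
        ∑ i, (if ε i then (1 : ℤ) else -1) = x)).card : ℝ) / 2 ^ n))
    (hb : ∀ n, b n = (lam / 2) ^ n / n.factorial *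
      (if (n : ℤ) % 2 = x % 2 then 1 else 0))
    (k l : ℕ) (hkl : k ≤ l) :
    a k * b l ≤ a l * b k := by
  have hc : ∀ n, (((univ.filter (fun ε : Fin n → Bool =>
        ∑ i, (if ε i then (1 : ℤ) else -1) = x)).card : ℝ)) = (cnt x n : ℝ) := by
    intro n; rfl
  have ha' : ∀ n, a n = lam ^ n / n.factorial * ((cnt x n : ℝ) / 2 ^ n) := by
    intro n; rw [ha, hc]
  have hanonneg : ∀ n, 0 ≤ a n := by
    intro n; rw [ha']; positivity
  have hbnonneg : ∀ n, 0 ≤ b n := by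
    intro n; rw [hb]; split <;> positivity
  by_cases hl : (l : ℤ) % 2 = x % 2
  · by_cases hk : (k : ℤ) % 2 = x % 2
    · -- both parities match
      obtain ⟨m, rfl⟩ : ∃ m, l = k + 2 * m := ⟨(l - k) / 2, by omega⟩
      set l := k + 2 * m
      rw [ha', ha', hb l, hb k, if_pos hl, if_pos hk]
      have hcc : (cnt x k : ℝ) ≤ (cnt x l : ℝ) := by
        exact_mod_cast cnt_mono x k m
      have hC : (0:ℝ) ≤ lam ^ k * lam ^ l /
          ((2:ℝ) ^ k * (2:ℝ) ^ l * k.factorial * l.factorial) := by positivity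
      have e1 : lam ^ k / k.factorial * ((cnt x k : ℝ) / 2 ^ k) *
          ((lam / 2) ^ l / l.factorial * 1) =
          lam ^ k * lam ^ l /
          ((2:ℝ) ^ k * (2:ℝ) ^ l * k.factorial * l.factorial) * (cnt x k : ℝ) := by
        rw [div_pow]
        have hk0 : (k.factorial : ℝ) ≠ 0 := by positivity
        have hl0 : (l.factorial : ℝ) ≠ 0 := by positivity
        field_simp
      have e2 : lam ^ l / l.factorial * ((cnt x l : ℝ) / 2 ^ l) *
          ((lam / 2) ^ k / k.factorial * 1) =
          lam ^ k * lam ^ l /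
          ((2:ℝ) ^ k * (2:ℝ) ^ l * k.factorial * l.factorial) * (cnt x l : ℝ) := by
        rw [div_pow]
        have hk0 : (k.factorial : ℝ) ≠ 0 := by positivity
        have hl0 : (l.factorial : ℝ) ≠ 0 := by positivity
        field_simp
      rw [e1, e2]
      exact mul_le_mul_of_nonneg_left hcc hC
    · -- a k = 0
      have : cnt x k = 0 := cnt_zero_of_parity x k hk
      have hak : a k = 0 := by rw [ha', this]; simp
      rw [hak, zero_mul]
      exact mul_nonneg (hanonneg l) (hbnonneg k)
  · -- b l = 0
    have hbl : b l = 0 := by rw [hb, if_neg hl]; simp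
    rw [hbl, mul_zero]
    exact mul_nonneg (hanonneg l) (hbnonneg k)
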